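/- Any NP_2-irreducible digital image is NP_2-rigid; that is, if X is not NP_2-homotopy equivalent to any digital image with fewer points, then the only continuous map X → X that is NP_2-homotopic to id_X is id_X itself. -/

import Mathlib

/-- A digital image: a finite set with a reflexive, symmetric adjacency relation
(a finite reflexive graph). -/
structure DigImage where
  carrier : Type
  [fintype : Fintype carrier]
  adj : carrier → carrier → Prop
  adj_refl : ∀ x, adj x x
  adj_symm : ∀ {x y}, adj x y → adj y x

attribute [instance] DigImage.fintype

/-- `f : (X,κ) → (Y,λ)` is digitally continuous if it preserves adjacency. -/
def DigContinuous (X Y : DigImage) (f : X.carrier → Y.carrier) : Prop :=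
  ∀ ⦃a b : X.carrier⦄, X.adj a b → Y.adj (f a) (f b)

/-- The product of two digital images with the normal product adjacency `NP_i`
(for `i ≤ 1` this is `NP_1`; otherwise `NP_2`): two pairs are adjacent iff
their coordinates are adjacent in at most `i` positions and equal elsewhere. -/
def DigImage.prod (i : ℕ) (X Y : DigImage) : DigImage where
  carrier := X.carrier × Y.carrier
  adj p q :=
    if i ≤ 1 then (p.1 = q.1 ∧ Y.adj p.2 q.2) ∨ (p.2 = q.2 ∧ X.adj p.1 q.1)
    else X.adj p.1 q.1 ∧ Y.adj p.2 q.2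
  adj_refl p := by
    split_ifs
    · exact Or.inl ⟨rfl, Y.adj_refl p.2⟩
    · exact ⟨X.adj_refl p.1, Y.adj_refl p.2⟩
  adj_symm {p q} h := by
    split_ifs at h ⊢ with hi
    · rcases h with ⟨h1, h2⟩ | ⟨h1, h2⟩
      · exact Or.inl ⟨h1.symm, Y.adj_symm h2⟩
      · exact Or.inr ⟨h1.symm, X.adj_symm h2⟩
    · exact ⟨X.adj_symm h.1, Y.adj_symm h.2⟩

/-- The triple product of digital images with the normal product adjacency `NP_i`:
coordinates adjacent in at most `i` positions and equal in all other positions. -/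
def DigImage.prod3 (i : ℕ) (X Y Z : DigImage) : DigImage where
  carrier := X.carrier × Y.carrier × Z.carrier
  adj p q :=
    if i ≤ 1 then
      (p.1 = q.1 ∧ p.2.1 = q.2.1 ∧ Z.adj p.2.2 q.2.2) ∨
      (p.1 = q.1 ∧ p.2.2 = q.2.2 ∧ Y.adj p.2.1 q.2.1) ∨
      (p.2.1 = q.2.1 ∧ p.2.2 = q.2.2 ∧ X.adj p.1 q.1)
    else
      (p.1 = q.1 ∧ Y.adj p.2.1 q.2.1 ∧ Z.adj p.2.2 q.2.2) ∨
      (p.2.1 = q.2.1 ∧ X.adj p.1 q.1 ∧ Z.adj p.2.2 q.2.2) ∨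
      (p.2.2 = q.2.2 ∧ X.adj p.1 q.1 ∧ Y.adj p.2.1 q.2.1)
  adj_refl p := by
    split_ifs
    · exact Or.inl ⟨rfl, rfl, Z.adj_refl p.2.2⟩
    · exact Or.inl ⟨rfl, Y.adj_refl p.2.1, Z.adj_refl p.2.2⟩
  adj_symm {p q} h := by
    split_ifs at h ⊢ with hi
    · rcases h with ⟨h1, h2, h3⟩ | ⟨h1, h2, h3⟩ | ⟨h1, h2, h3⟩
      · exact Or.inl ⟨h1.symm, h2.symm, Z.adj_symm h3⟩
      · exact Or.inr (Or.inl ⟨h1.symm, h2.symm, Y.adj_symm h3⟩)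
      · exact Or.inr (Or.inr ⟨h1.symm, h2.symm, X.adj_symm h3⟩)
    · rcases h with ⟨h1, h2, h3⟩ | ⟨h1, h2, h3⟩ | ⟨h1, h2, h3⟩
      · exact Or.inl ⟨h1.symm, Y.adj_symm h2, Z.adj_symm h3⟩
      · exact Or.inr (Or.inl ⟨h1.symm, X.adj_symm h2, Z.adj_symm h3⟩)
      · exact Or.inr (Or.inr ⟨h1.symm, X.adj_symm h2, Y.adj_symm h3⟩)

/-- The digital interval `[0,m]_ℤ` with the standard adjacency `|a−b| ≤ 1`. -/
def digInterval (m : ℕ) : DigImage where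
  carrier := Fin (m + 1)
  adj a b := |(a : ℤ) - (b : ℤ)| ≤ 1
  adj_refl a := by simp
  adj_symm {a b} h := by
    have h' : |(a : ℤ) - (b : ℤ)| ≤ 1 := h
    rw [abs_sub_comm] at h'
    exact h'

/-- `f` and `g` are `NP_i`-digitally homotopic: there is an
`NP_i`-continuous `H : X × [0,m]_ℤ → Y` with `H(·,0) = f` and `H(·,m) = g`. -/
def DigHomotopic (i : ℕ) (X Y : DigImage) (f g : X.carrier → Y.carrier) : Prop :=
  ∃ (m : ℕ) (H : X.carrier × Fin (m + 1) → Y.carrier),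
    DigContinuous (DigImage.prod i X (digInterval m)) Y H ∧
    (∀ x, H (x, 0) = f x) ∧ (∀ x, H (x, Fin.last m) = g x)

/-- An `NP_i`-digital H-space `(X,e,μ)`. -/
structure IsHSpace (i : ℕ) (X : DigImage) (e : X.carrier)
    (μ : X.carrier × X.carrier → X.carrier) : Prop where
  continuous : DigContinuous (DigImage.prod i X X) X μ
  right_unit : DigHomotopic i X X (fun x => μ (x, e)) id
  left_unit : DigHomotopic i X X (fun x => μ (e, x)) id

/-- H-equivalence of `NP_i`-digital H-spaces. -/
def HSpaceEquiv (i : ℕ) (X : DigImage) (eX : X.carrier)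
    (μX : X.carrier × X.carrier → X.carrier)
    (Y : DigImage) (eY : Y.carrier)
    (μY : Y.carrier × Y.carrier → Y.carrier) : Prop :=
  ∃ (f : X.carrier → Y.carrier) (g : Y.carrier → X.carrier),
    DigContinuous X Y f ∧ DigContinuous Y X g ∧ f eX = eY ∧ g eY = eX ∧
    DigHomotopic i Y Y (f ∘ g) id ∧ DigHomotopic i X X (g ∘ f) id ∧
    DigHomotopic i (DigImage.prod i X X) Y (fun p => f (μX p)) (fun p => μY (f p.1, f p.2)) ∧
    DigHomotopic i (DigImage.prod i Y Y) X (fun p => g (μY p)) (fun p => μX (g p.1, g p.2))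

/-- `NP_i`-homotopy equivalence of digital images. -/
def DigHtpyEquiv (i : ℕ) (X Y : DigImage) : Prop :=
  ∃ (f : X.carrier → Y.carrier) (g : Y.carrier → X.carrier),
    DigContinuous X Y f ∧ DigContinuous Y X g ∧
    DigHomotopic i X X (g ∘ f) id ∧ DigHomotopic i Y Y (f ∘ g) id

/-- A digital image is `NP_i`-irreducible if it is not `NP_i`-homotopy
equivalent to any digital image with fewer points. -/
def DigIrreducible (i : ℕ) (X : DigImage) : Prop :=
  ¬ ∃ Y : DigImage, Fintype.card Y.carrier < Fintype.card X.carrier ∧ DigHtpyEquiv i X Y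

/-- A digital image is connected if any two points are joined by a path
of consecutively adjacent points. -/
def DigConnected (X : DigImage) : Prop :=
  ∀ a b : X.carrier, Relation.ReflTransGen X.adj a b

/-- A digital image is `NP_i`-contractible if the identity is `NP_i`-homotopic
to a constant map. -/
def DigContractible (i : ℕ) (X : DigImage) : Prop :=
  ∃ c : X.carrier, DigHomotopic i X X id (fun _ => c)

/-- An isomorphism of digital images: a continuous bijection with continuous inverse. -/
def IsDigIso (X Y : DigImage) (f : X.carrier → Y.carrier) : Prop :=
  DigContinuous X Y f ∧ ∃ g : Y.carrier → X.carrier,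
    DigContinuous Y X g ∧ Function.LeftInverse g f ∧ Function.RightInverse g f

/-- The sub-digital-image on the points satisfying `P`, with the induced adjacency. -/
noncomputable def subImage (X : DigImage) (P : X.carrier → Prop) : DigImage where
  carrier := {x : X.carrier // P x}
  fintype := Fintype.ofFinite _
  adj a b := X.adj a.1 b.1
  adj_refl a := X.adj_refl a.1
  adj_symm h := X.adj_symm h

/-- The connected component of `e`, as a digital image. -/
noncomputable def componentImage (X : DigImage) (e : X.carrier) : DigImage :=
  subImage X (fun x => Relation.ReflTransGen X.adj e x)

/-- Homotopy-associativity of an `NP_i`-digital multiplication: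
`μ∘(id × μ) ≃ᵢ μ∘(μ × id)` as maps `X × X × X → X` with `NP_i` adjacency. -/
def HomotopyAssociative (i : ℕ) (X : DigImage)
    (μ : X.carrier × X.carrier → X.carrier) : Prop :=
  DigHomotopic i (DigImage.prod3 i X X X) X
    (fun p => μ (p.1, μ (p.2.1, p.2.2)))
    (fun p => μ (μ (p.1, p.2.1), p.2.2))

/-- `α` is a left homotopy-inverse for the H-space `(X,e,μ)`. -/
def LeftHtpyInverse (i : ℕ) (X : DigImage) (e : X.carrier)
    (μ : X.carrier × X.carrier → X.carrier) (α : X.carrier → X.carrier) : Prop :=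
  DigContinuous X X α ∧ DigContinuous X X (fun x => μ (α x, x)) ∧
  DigHomotopic i X X (fun x => μ (α x, x)) (fun _ => e)

/-- `β` is a right homotopy-inverse for the H-space `(X,e,μ)`. -/
def RightHtpyInverse (i : ℕ) (X : DigImage) (e : X.carrier)
    (μ : X.carrier × X.carrier → X.carrier) (β : X.carrier → X.carrier) : Prop :=
  DigContinuous X X β ∧ DigContinuous X X (fun x => μ (x, β x)) ∧
  DigHomotopic i X X (fun x => μ (x, β x)) (fun _ => e)

lemma np2_key (X : DigImage) (hirr : DigIrreducible 2 X) (g : X.carrier → X.carrier)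
    (P1 : ∀ {a b : X.carrier}, X.adj a b → X.adj (g a) (g b))
    (P2 : ∀ {a b : X.carrier}, X.adj a b → X.adj (g a) b) : g = id := by
  classical
  by_contra hg
  obtain ⟨x₀, hx₀⟩ : ∃ x, g x ≠ x := by
    by_contra hc; push_neg at hc; exact hg (funext fun x => hc x)
  set Y : DigImage := subImage X (fun x => x ≠ x₀) with hY
  set g' : X.carrier → X.carrier := fun x => if _ : x = x₀ then g x₀ else x with hg'
  have hgv : ∀ x, x = x₀ → g' x = g x₀ := by
    intro x hx; rw [hg']; exact dif_pos hx
  have hgn : ∀ x, x ≠ x₀ → g' x = x := by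
    intro x hx; rw [hg']; exact dif_neg hx
  have hne : ∀ x, g' x ≠ x₀ := by
    intro x
    by_cases hx : x = x₀
    · rw [hgv x hx]; exact fun hc => hx₀ (hx ▸ hc)
    · rw [hgn x hx]; exact hx
  set F : X.carrier → Y.carrier := fun x => ⟨g' x, hne x⟩ with hF
  have Q2 : ∀ {u v : X.carrier}, X.adj u v → X.adj (g' u) v := by
    intro u v h
    by_cases hu : u = x₀
    · rw [hgv u hu]; exact P2 (hu ▸ h)
    · rw [hgn u hu]; exact h
  have Q2' : ∀ {u v : X.carrier}, X.adj u v → X.adj u (g' v) := by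
    intro u v h
    exact X.adj_symm (Q2 (X.adj_symm h))
  have Q1 : ∀ {u v : X.carrier}, X.adj u v → X.adj (g' u) (g' v) := by
    intro u v h
    by_cases hv : v = x₀
    · rw [hgv v hv]
      by_cases hu : u = x₀
      · rw [hgv u hu]; exact X.adj_refl _
      · rw [hgn u hu]
        exact X.adj_symm (P2 (X.adj_symm (hv ▸ h)))
    · rw [hgn v hv]
      exact Q2 h
  apply hirr
  refine ⟨Y, ?_, F, Subtype.val, ?_, ?_, ?_, ?_⟩
  · have e : Fintype.card Y.carrier = Fintype.card {x : X.carrier // x ≠ x₀} :=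
      Fintype.card_congr (Equiv.refl _)
    rw [e]
    exact Fintype.card_subtype_lt (x := x₀) (by simp)
  · intro a b h
    exact Q1 h
  · intro a b h
    exact h
  · -- Subtype.val ∘ F = g' ≃ id, one step homotopy
    refine ⟨1, fun p => if p.2 = Fin.last 1 then p.1 else g' p.1, ?_, ?_, ?_⟩
    · rintro ⟨a, (s : Fin (1+1))⟩ ⟨b, (t : Fin (1+1))⟩ h
      have hab : X.adj a b := by
        simp only [DigImage.prod] at h
        norm_num at h
        exact h.1
      dsimp only
      by_cases hs : s = Fin.last 1 <;> by_cases ht : t = Fin.last 1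
      · rw [if_pos hs, if_pos ht]; exact hab
      · rw [if_pos hs, if_neg ht]; exact Q2' hab
      · rw [if_neg hs, if_pos ht]; exact Q2 hab
      · rw [if_neg hs, if_neg ht]; exact Q1 hab
    · intro x
      dsimp only
      rw [if_neg (by decide)]; rfl
    · intro x
      dsimp only
      rw [if_pos rfl]; rfl
  · -- F ∘ val = id on Y
    refine ⟨0, fun p => p.1, ?_, ?_, ?_⟩
    · rintro ⟨a, s⟩ ⟨b, t⟩ h
      simp only [DigImage.prod] at h
      norm_num at h
      exact h.1
    · rintro ⟨x, hx⟩
      exact Subtype.ext (hgn x hx).symm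
    · intro x; rfl

/-- Any `NP_2`-irreducible digital image is `NP_2`-rigid: the only
continuous self-map `NP_2`-homotopic to the identity is the identity itself. -/
theorem np2_irreducible_rigid (X : DigImage) (hirr : DigIrreducible 2 X)
    (f : X.carrier → X.carrier) (hf : DigContinuous X X f)
    (hfid : DigHomotopic 2 X X f id) :
    f = id := by
  classical
  obtain ⟨m, H, hH, h0, hm⟩ := hfid
  have step : ∀ (s t : Fin (m+1)), |(s:ℤ) - (t:ℤ)| ≤ 1 →
      ∀ {a b : X.carrier}, X.adj a b → X.adj (H (a, s)) (H (b, t)) := by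
    intro s t hst a b hab
    apply hH
    show (DigImage.prod 2 X (digInterval m)).adj (a, s) (b, t)
    simp only [DigImage.prod]
    rw [if_neg (by norm_num)]
    exact ⟨hab, hst⟩
  have claim : ∀ k : ℕ, ∀ x : X.carrier,
      H (x, ⟨m - k, Nat.lt_succ_of_le (Nat.sub_le m k)⟩) = x := by
    intro k
    induction k with
    | zero =>
      intro x
      have : (⟨m - 0, Nat.lt_succ_of_le (Nat.sub_le m 0)⟩ : Fin (m+1)) = Fin.last m := by
        apply Fin.ext; simp [Fin.last]
      rw [this, hm x]; rfl
    | succ k IH =>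
      intro x
      by_cases hk : m ≤ k
      · have : m - (k+1) = m - k := by omega
        have heq : (⟨m - (k+1), Nat.lt_succ_of_le (Nat.sub_le m (k+1))⟩ : Fin (m+1)) =
            ⟨m - k, Nat.lt_succ_of_le (Nat.sub_le m k)⟩ := by
          apply Fin.ext; simpa using this
        rw [heq]; exact IH x
      · set t : Fin (m+1) := ⟨m - (k+1), Nat.lt_succ_of_le (Nat.sub_le m (k+1))⟩ with ht
        set t' : Fin (m+1) := ⟨m - k, Nat.lt_succ_of_le (Nat.sub_le m k)⟩ with ht'
        have hadj : |(t:ℤ) - (t':ℤ)| ≤ 1 := by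
          rw [ht, ht']
          simp only [Fin.val]
          rw [abs_le]
          constructor <;> omega
        have hrefl : ∀ (u : Fin (m+1)), |(u:ℤ) - (u:ℤ)| ≤ 1 := by intro u; simp
        have hgid : (fun x => H (x, t)) = id :=
          np2_key X hirr (fun x => H (x, t))
            (fun {a b} hab => step t t (hrefl t) hab)
            (fun {a b} hab => by
              have := step t t' hadj hab
              rwa [IH b] at this)
        exact congrFun hgid x
  funext x
  have h00 : (0 : Fin (m+1)) = ⟨m - m, Nat.lt_succ_of_le (Nat.sub_le m m)⟩ := by
    apply Fin.ext; simp
  calc f x = H (x, 0) := (h0 x).symm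
    _ = x := by rw [h00]; exact claim m x
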